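/- Let Γ be a diagram of finite type on vertices 1,…,n, let k be a vertex, let Γ' = μ_k(Γ), and let m'_{ij} denote the values m_{ij} computed from Γ'. Let s_1,…,s_n be the defining generators of W_Γ and, for each vertex i, set t_i = s_k s_i s_k if Γ has an arrow from i to k (of any weight) and t_i = s_i otherwise. Then, for distinct vertices i, j: (a) if i = k or j = k then (t_i t_j)^{m'_{ij}} = e in W_Γ; (b) if at most one of i, j is connected to k by an edge of Γ, then (t_i t_j)^{m'_{ij}} = e in W_Γ. -/

import Mathlib

namespace ClusterReflection

variable {n : ℕ}

def IsSkewSymmetrizable (B : Matrix (Fin n) (Fin n) ℤ) : Prop :=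
  ∃ d : Fin n → ℤ, (∀ i, 0 < d i) ∧ ∀ i j, d i * B i j = -(d j * B j i)

def mutate (k : Fin n) (B : Matrix (Fin n) (Fin n) ℤ) : Matrix (Fin n) (Fin n) ℤ :=
  Matrix.of fun i j =>
    if i = k ∨ j = k then -B i j
    else B i j + (|B i k| * B k j + B i k * |B k j|) / 2

def Mutation (X Y : Matrix (Fin n) (Fin n) ℤ) : Prop := ∃ k, Y = mutate k X

def IsFiniteType (B : Matrix (Fin n) (Fin n) ℤ) : Prop :=
  ∀ B', Relation.ReflTransGen Mutation B B' → ∀ i j, |B' i j * B' j i| ≤ 3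

/-- The Coxeter exponent `m i j` attached to a pair of vertices of the diagram of `B`:
`2` if there is no edge, and `3`, `4`, `6` for an edge of weight `1`, `2`, `3`. -/
def coxm (B : Matrix (Fin n) (Fin n) ℤ) (i j : Fin n) : ℕ :=
  if B i j * B j i = 0 then 2
  else if |B i j * B j i| = 1 then 3
  else if |B i j * B j i| = 2 then 4
  else 6

/-- Relations (R1). -/
def R1 {W : Type*} [Group W] (s : Fin n → W) : Prop := ∀ i, s i ^ 2 = 1

/-- Relations (R2). -/
def R2 {W : Type*} [Group W] (B : Matrix (Fin n) (Fin n) ℤ) (s : Fin n → W) : Prop :=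
  ∀ i j, i ≠ j → (s i * s j) ^ coxm B i j = 1

/-- `v : ZMod d → Fin n` lists the vertices of an (oriented) chordless cycle
`v 0 → v 1 → ⋯ → v (d-1) → v 0` of the diagram of `B`. -/
def IsChordlessCycle (B : Matrix (Fin n) (Fin n) ℤ) {d : ℕ} (v : ZMod d → Fin n) : Prop :=
  Function.Injective v ∧ (∀ a : ZMod d, 0 < B (v a) (v (a + 1))) ∧
    ∀ a b : ZMod d, a ≠ b → b ≠ a + 1 → a ≠ b + 1 → B (v a) (v b) = 0

/-- The element `r(i_a, i_{a+1}) = s_{i_a} s_{i_{a+1}} ⋯ s_{i_{a+d-1}} s_{i_{a+d-2}} ⋯ s_{i_{a+1}}`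
attached to a chordless cycle `v` and a starting vertex `a`. -/
def cycleWord {W : Type*} [Group W] (s : Fin n → W) {d : ℕ} (v : ZMod d → Fin n)
    (a : ZMod d) : W :=
  (((List.range d).map fun t => s (v (a + (t : ZMod d)))).prod) *
    (((List.range (d - 2)).map fun t => s (v (a + ((d - 2 - t : ℕ) : ZMod d)))).prod)

open scoped Classical in
/-- The exponent in relation (R3): `2` if all the weights of the cycle are `1`, and otherwise
`4 - w_a`, where `w_a` is the weight of the edge of the cycle between `v (a-1)` and `v a`. -/
noncomputable def cycleExp (B : Matrix (Fin n) (Fin n) ℤ) {d : ℕ} (v : ZMod d → Fin n)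
    (a : ZMod d) : ℕ :=
  if ∀ b : ZMod d, |B (v b) (v (b + 1)) * B (v (b + 1)) (v b)| = 1 then 2
  else 4 - (|B (v (a - 1)) (v a) * B (v a) (v (a - 1))|).toNat

/-- Relations (R3). -/
def R3 {W : Type*} [Group W] (B : Matrix (Fin n) (Fin n) ℤ) (s : Fin n → W) : Prop :=
  ∀ d : ℕ, 3 ≤ d → ∀ v : ZMod d → Fin n, IsChordlessCycle B v →
    ∀ a : ZMod d, cycleWord s v a ^ cycleExp B v a = 1

/-- The set of relators (R1), (R2), (R3) in the free group on the vertices. -/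
def diagramRels (B : Matrix (Fin n) (Fin n) ℤ) : Set (FreeGroup (Fin n)) :=
  {w | (∃ i, w = FreeGroup.of i ^ 2) ∨
       (∃ i j, i ≠ j ∧ w = (FreeGroup.of i * FreeGroup.of j) ^ coxm B i j) ∨
       (∃ d : ℕ, 3 ≤ d ∧ ∃ v : ZMod d → Fin n, IsChordlessCycle B v ∧
          ∃ a : ZMod d, w = cycleWord FreeGroup.of v a ^ cycleExp B v a)}

/-- The group `W_Γ` associated to the diagram of `B`. -/
abbrev DiagramGroup (B : Matrix (Fin n) (Fin n) ℤ) : Type := PresentedGroup (diagramRels B)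

/-- The element `t_i ∈ W_Γ`: `t_i = s_k s_i s_k` if the diagram of `B` has an arrow `i → k`
(of any weight), i.e. `B_{ik} > 0`, and `t_i = s_i` otherwise. -/
def tGen (B : Matrix (Fin n) (Fin n) ℤ) (k i : Fin n) : PresentedGroup (diagramRels B) :=
  if 0 < B i k then PresentedGroup.of k * PresentedGroup.of i * PresentedGroup.of k
  else PresentedGroup.of i

section AuxGroup
variable {W : Type*} [Group W]

lemma aux_pow_swap {x a : W} {m : ℕ} (h : (x * a) ^ m = 1) : (a * x) ^ m = 1 := by
  have hx : a * x = a * (x * a) * a⁻¹ := by group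
  rw [hx, conj_pow, h]; group

lemma aux_conj_rel {a x : W} {m : ℕ} (ha : a * a = 1) (h : x ^ m = 1) :
    (a * x * a) ^ m = 1 := by
  have hinv : a⁻¹ = a := inv_eq_of_mul_eq_one_right ha
  have hx : a * x * a = a * x * a⁻¹ := by rw [hinv]
  rw [hx, conj_pow, h]; group

lemma aux_comm_of_sq {a b : W} (h : (a * b) ^ 2 = 1) : a * b = b⁻¹ * a⁻¹ := by
  have h1 : (a * b) * (a * b) = 1 := by rw [← pow_two]; exact h
  have h2 : a * b = (a * b)⁻¹ := (inv_eq_of_mul_eq_one_right h1).symm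
  rw [h2, mul_inv_rev]

end AuxGroup

lemma coxm_congr {B C : Matrix (Fin n) (Fin n) ℤ} {i j : Fin n}
    (h : B i j * B j i = C i j * C j i) : coxm B i j = coxm C i j := by
  unfold coxm; rw [h]

lemma coxm_symm (B : Matrix (Fin n) (Fin n) ℤ) (i j : Fin n) :
    coxm B i j = coxm B j i := by
  unfold coxm; rw [mul_comm]

lemma relator_one (B : Matrix (Fin n) (Fin n) ℤ) {r : FreeGroup (Fin n)}
    (h : r ∈ diagramRels B) : (QuotientGroup.mk r : DiagramGroup B) = 1 :=
  (QuotientGroup.eq_one_iff r).2 (Subgroup.subset_normalClosure h)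

lemma sgen_sq (B : Matrix (Fin n) (Fin n) ℤ) (i : Fin n) :
    (PresentedGroup.of i : DiagramGroup B) * PresentedGroup.of i = 1 := by
  have h := relator_one B (Or.inl ⟨i, rfl⟩)
  rw [← pow_two]
  have h' : PresentedGroup.mk (diagramRels B) (FreeGroup.of i ^ 2) = 1 := h
  simpa [map_pow, PresentedGroup.of] using h'

lemma sgen_rel (B : Matrix (Fin n) (Fin n) ℤ) {i j : Fin n} (hij : i ≠ j) :
    ((PresentedGroup.of i : DiagramGroup B) * PresentedGroup.of j) ^ coxm B i j = 1 := by
  have h := relator_one B (Or.inr (Or.inl ⟨i, j, hij, rfl⟩))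
  have h' : PresentedGroup.mk (diagramRels B)
      ((FreeGroup.of i * FreeGroup.of j) ^ coxm B i j) = 1 := h
  simpa [map_pow, map_mul, PresentedGroup.of] using h'

/-- Lemma 5.1: let `Γ' = μ_k(Γ)` be the mutation at `k` of a diagram `Γ` of
finite type, with exponents `m'_{ij} = coxm (mutate k B) i j`.  Then for distinct vertices
`i, j`: (a) if `i = k` or `j = k`, then `(t_i t_j)^{m'_{ij}} = e` in `W_Γ`;
(b) if at most one of `i`, `j` is connected to `k` by an edge of `Γ`, then
`(t_i t_j)^{m'_{ij}} = e` in `W_Γ`. -/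
theorem mutated_generators_easy_relations
    (B : Matrix (Fin n) (Fin n) ℤ)
    (hskew : IsSkewSymmetrizable B) (hft : IsFiniteType B) (k : Fin n) :
    ∀ i j : Fin n, i ≠ j →
      ((i = k ∨ j = k) →
        (tGen B k i * tGen B k j) ^ coxm (mutate k B) i j = 1) ∧
      (¬(B i k ≠ 0 ∧ B j k ≠ 0) →
        (tGen B k i * tGen B k j) ^ coxm (mutate k B) i j = 1) := by
  clear hft
  obtain ⟨d, hdpos, hsk⟩ := hskew
  have hBkk : B k k = 0 := by nlinarith [hsk k k, hdpos k]
  have hzero : ∀ a b : Fin n, B a b = 0 → B b a = 0 := by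
    intro a b h
    have h1 := hsk a b
    rw [h, mul_zero] at h1
    have h2 : d b * B b a = 0 := by linarith
    rcases mul_eq_zero.mp h2 with h3 | h3
    · exact absurd h3 (hdpos b).ne'
    · exact h3
  have hs2 := sgen_sq B
  -- commutation when no edge
  have hcomm : ∀ a : Fin n, a ≠ k → B a k = 0 →
      (PresentedGroup.of a : DiagramGroup B) * PresentedGroup.of k =
        PresentedGroup.of k * PresentedGroup.of a := by
    intro a ha h0
    have hm : coxm B a k = 2 := by unfold coxm; rw [h0, zero_mul]; simp
    have hr := sgen_rel B ha
    rw [hm] at hr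
    have := aux_comm_of_sq hr
    rw [inv_eq_of_mul_eq_one_right (hs2 k), inv_eq_of_mul_eq_one_right (hs2 a)] at this
    exact this
  -- coxm of mutated matrix when one index is k
  have hmk : ∀ a : Fin n, coxm (mutate k B) a k = coxm B a k := by
    intro a
    refine coxm_congr ?_
    have e1 : mutate k B a k = -B a k := by simp [mutate]
    have e2 : mutate k B k a = -B k a := by simp [mutate]
    rw [e1, e2]; ring
  have hkm : ∀ a : Fin n, coxm (mutate k B) k a = coxm B k a := by
    intro a
    refine coxm_congr ?_
    have e1 : mutate k B a k = -B a k := by simp [mutate]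
    have e2 : mutate k B k a = -B k a := by simp [mutate]
    rw [e2, e1]; ring
  -- the "one index is k" cases
  have mainK : ∀ i j : Fin n, i ≠ j → (i = k ∨ j = k) →
      (tGen B k i * tGen B k j) ^ coxm (mutate k B) i j = 1 := by
    intro i j hij hk
    rcases hk with hik | hjk
    · subst hik
      have htk : tGen B i i = PresentedGroup.of i := by
        rw [tGen, if_neg (by rw [hBkk]; exact lt_irrefl 0)]
      rw [htk, hkm j]
      by_cases hj : 0 < B j i
      · rw [tGen, if_pos hj]
        have he : (PresentedGroup.of i : DiagramGroup B) *
            (PresentedGroup.of i * PresentedGroup.of j * PresentedGroup.of i) =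
            PresentedGroup.of j * PresentedGroup.of i := by
          rw [← mul_assoc, ← mul_assoc, hs2 i, one_mul]
        rw [he, coxm_symm]
        exact sgen_rel B (Ne.symm hij)
      · rw [tGen, if_neg hj]
        exact sgen_rel B hij
    · subst hjk
      have htk : tGen B j j = PresentedGroup.of j := by
        rw [tGen, if_neg (by rw [hBkk]; exact lt_irrefl 0)]
      rw [htk, hmk i]
      by_cases hi : 0 < B i j
      · rw [tGen, if_pos hi]
        have he : (PresentedGroup.of j : DiagramGroup B) * PresentedGroup.of i *
            PresentedGroup.of j * PresentedGroup.of j =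
            PresentedGroup.of j * PresentedGroup.of i := by
          rw [mul_assoc, hs2 j, mul_one]
        rw [he]
        exact aux_pow_swap (sgen_rel B hij)
      · rw [tGen, if_neg hi]
        exact sgen_rel B hij
  intro i j hij
  refine ⟨mainK i j hij, ?_⟩
  intro hnb
  by_cases hik : i = k
  · exact mainK i j hij (Or.inl hik)
  by_cases hjk : j = k
  · exact mainK i j hij (Or.inr hjk)
  -- both differ from k
  by_cases hBik : B i k = 0
  · -- t_i = s_i, and mutated entries at (i,j),(j,i) are unchanged
    have hBki : B k i = 0 := hzero i k hBik
    have hm' : coxm (mutate k B) i j = coxm B i j := by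
      refine coxm_congr ?_
      have hc : ¬ (i = k ∨ j = k) := by tauto
      have hc' : ¬ (j = k ∨ i = k) := by tauto
      simp only [mutate, Matrix.of_apply, if_neg hc, if_neg hc', hBik, hBki]
      simp
    have hti : tGen B k i = PresentedGroup.of i := by
      rw [tGen, if_neg (by rw [hBik]; exact lt_irrefl 0)]
    rw [hm', hti]
    by_cases hj : 0 < B j k
    · rw [tGen, if_pos hj]
      have he : (PresentedGroup.of i : DiagramGroup B) *
          (PresentedGroup.of k * PresentedGroup.of j * PresentedGroup.of k) =
          PresentedGroup.of k * (PresentedGroup.of i * PresentedGroup.of j) *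
            PresentedGroup.of k := by
        rw [← mul_assoc, ← mul_assoc, hcomm i hik hBik, mul_assoc (PresentedGroup.of k),
          ← mul_assoc]
      rw [he]
      exact aux_conj_rel (hs2 k) (sgen_rel B hij)
    · rw [tGen, if_neg hj]
      exact sgen_rel B hij
  · -- then B j k = 0
    have hBjk : B j k = 0 := by tauto
    have hBkj : B k j = 0 := hzero j k hBjk
    have hm' : coxm (mutate k B) i j = coxm B i j := by
      refine coxm_congr ?_
      have hc : ¬ (i = k ∨ j = k) := by tauto
      have hc' : ¬ (j = k ∨ i = k) := by tauto
      simp only [mutate, Matrix.of_apply, if_neg hc, if_neg hc', hBjk, hBkj]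
      simp
    have htj : tGen B k j = PresentedGroup.of j := by
      rw [tGen, if_neg (by rw [hBjk]; exact lt_irrefl 0)]
    rw [hm', htj]
    by_cases hi : 0 < B i k
    · rw [tGen, if_pos hi]
      have he : (PresentedGroup.of k : DiagramGroup B) * PresentedGroup.of i *
          PresentedGroup.of k * PresentedGroup.of j =
          PresentedGroup.of k * (PresentedGroup.of i * PresentedGroup.of j) *
            PresentedGroup.of k := by
        rw [mul_assoc (PresentedGroup.of k * PresentedGroup.of i), ← hcomm j hjk hBjk,
          ← mul_assoc, mul_assoc (PresentedGroup.of k) (PresentedGroup.of i)]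
      rw [he]
      exact aux_conj_rel (hs2 k) (sgen_rel B hij)
    · rw [tGen, if_neg hi]
      exact sgen_rel B hij

end ClusterReflection
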